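/- Let X and Y be normed spaces, ε > 0, and f : X → Y a linear map with ‖f‖ ≤ 1 which is an ε-isometry, i.e. (1−ε)‖x‖ ≤ ‖f x‖ ≤ ‖x‖ for all x. Define on X × Y the function ‖(x,y)‖_f = inf { ‖x−w‖_X + ‖y + f w‖_Y + ε‖w‖_X : w ∈ X }. Then ‖·‖_f is a norm on X × Y. -/
import Mathlib
open Pointwise


/-- the infimum formula ‖(x,y)‖_f defines a norm on X × Y. -/
theorem stmt_0 {X Y : Type*} [NormedAddCommGroup X] [NormedSpace ℝ X]
    [NormedAddCommGroup Y] [NormedSpace ℝ Y]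
    (ε : ℝ) (hε0 : 0 < ε) (hε1 : ε < 1)
    (f : X →L[ℝ] Y) (hf1 : ∀ x, ‖f x‖ ≤ ‖x‖)
    (hf2 : ∀ x, (1 - ε) * ‖x‖ ≤ ‖f x‖) :
    ∀ N : X × Y → ℝ,
      (N = fun p => sInf {r : ℝ | ∃ w : X, r = ‖p.1 - w‖ + ‖p.2 + f w‖ + ε * ‖w‖}) →
      (∀ p, 0 ≤ N p) ∧
      (∀ p, N p = 0 ↔ p = 0) ∧
      (∀ (a : ℝ) (p : X × Y), N (a • p) = |a| * N p) ∧
      (∀ p q : X × Y, N (p + q) ≤ N p + N q) := by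
  intro N hN
  set S : X × Y → Set ℝ := fun p => {r : ℝ | ∃ w : X, r = ‖p.1 - w‖ + ‖p.2 + f w‖ + ε * ‖w‖}
    with hS
  have hNS : ∀ p, N p = sInf (S p) := by intro p; rw [hN]
  have hne : ∀ p, (S p).Nonempty := fun p => ⟨_, 0, rfl⟩
  have hlb : ∀ p, ∀ r ∈ S p, 0 ≤ r := by
    rintro p r ⟨w, rfl⟩
    positivity
  have hbdd : ∀ p, BddBelow (S p) := fun p => ⟨0, hlb p⟩
  have hnn : ∀ p, 0 ≤ N p := by
    intro p; rw [hNS]; exact le_csInf (hne p) (hlb p)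
  have hx : ∀ p, ε * ‖p.1‖ ≤ N p := by
    intro p; rw [hNS]
    refine le_csInf (hne p) ?_
    rintro r ⟨w, rfl⟩
    have h1 : ‖p.1‖ ≤ ‖p.1 - w‖ + ‖w‖ := by
      simpa using norm_add_le (p.1 - w) w
    nlinarith [norm_nonneg (p.1 - w), norm_nonneg w, norm_nonneg (p.2 + f w),
      mul_le_mul_of_nonneg_left h1 hε0.le]
  have hy : ∀ p, ε * ‖p.2‖ ≤ N p := by
    intro p; rw [hNS]
    refine le_csInf (hne p) ?_
    rintro r ⟨w, rfl⟩
    have h1 : ‖p.2‖ ≤ ‖p.2 + f w‖ + ‖w‖ := by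
      calc ‖p.2‖ ≤ ‖p.2 + f w‖ + ‖f w‖ := by simpa using norm_add_le (p.2 + f w) (-(f w))
        _ ≤ ‖p.2 + f w‖ + ‖w‖ := by linarith [hf1 w]
    nlinarith [norm_nonneg (p.1 - w), norm_nonneg w, norm_nonneg (p.2 + f w),
      mul_le_mul_of_nonneg_left h1 hε0.le]
  have hN0 : N 0 = 0 := by
    rw [hNS]
    refine le_antisymm ?_ (le_csInf (hne 0) (hlb 0))
    refine csInf_le (hbdd 0) ⟨0, ?_⟩
    simp
  refine ⟨hnn, ?_, ?_, ?_⟩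
  · intro p
    constructor
    · intro h
      have h1 : ‖p.1‖ = 0 := le_antisymm (by nlinarith [hx p]) (norm_nonneg _)
      have h2 : ‖p.2‖ = 0 := le_antisymm (by nlinarith [hy p]) (norm_nonneg _)
      exact Prod.ext (norm_eq_zero.mp h1) (norm_eq_zero.mp h2)
    · rintro rfl; exact hN0
  · intro a p
    rcases eq_or_ne a 0 with rfl | ha
    · simp [hN0]
    · have himg : S (a • p) = (fun r => |a| * r) '' S p := by
        ext r
        constructor
        · rintro ⟨w, rfl⟩
          refine ⟨‖p.1 - a⁻¹ • w‖ + ‖p.2 + f (a⁻¹ • w)‖ + ε * ‖a⁻¹ • w‖, ⟨a⁻¹ • w, rfl⟩, ?_⟩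
          have e1 : (a • p).1 - w = a • (p.1 - a⁻¹ • w) := by
            simp [smul_sub, smul_smul, mul_inv_cancel₀ ha]
          have e2 : (a • p).2 + f w = a • (p.2 + f (a⁻¹ • w)) := by
            simp [smul_add, map_smul, smul_smul, mul_inv_cancel₀ ha]
          have e3 : ‖w‖ = |a| * ‖a⁻¹ • w‖ := by
            rw [norm_smul, Real.norm_eq_abs, abs_inv]
            field_simp
          have n1 : ‖(a • p).1 - w‖ = |a| * ‖p.1 - a⁻¹ • w‖ := by
            rw [e1, norm_smul, Real.norm_eq_abs]
          have n2 : ‖(a • p).2 + f w‖ = |a| * ‖p.2 + f (a⁻¹ • w)‖ := by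
            rw [e2, norm_smul, Real.norm_eq_abs]
          rw [n1, n2, e3]; ring
        · rintro ⟨r', ⟨w, rfl⟩, rfl⟩
          refine ⟨a • w, ?_⟩
          have e1 : (a • p).1 - a • w = a • (p.1 - w) := by simp [smul_sub]
          have e2 : (a • p).2 + f (a • w) = a • (p.2 + f w) := by
            simp [smul_add, map_smul]
          have n1 : ‖(a • p).1 - a • w‖ = |a| * ‖p.1 - w‖ := by
            rw [e1, norm_smul, Real.norm_eq_abs]
          have n2 : ‖(a • p).2 + f (a • w)‖ = |a| * ‖p.2 + f w‖ := by
            rw [e2, norm_smul, Real.norm_eq_abs]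
          have n3 : ‖a • w‖ = |a| * ‖w‖ := by rw [norm_smul, Real.norm_eq_abs]
          rw [n1, n2, n3]; ring
      rw [hNS, hNS, himg]
      have h2 : (fun r => |a| * r) '' S p = |a| • S p := by
        ext r; simp [Set.mem_smul_set, smul_eq_mul, eq_comm]
      rw [h2, Real.sInf_smul_of_nonneg (abs_nonneg a)]
      simp [smul_eq_mul]
  · intro p q
    rw [hNS, hNS, hNS]
    have key : ∀ a ∈ S p, ∀ b ∈ S q, sInf (S (p + q)) ≤ a + b := by
      rintro a ⟨w1, rfl⟩ b ⟨w2, rfl⟩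
      have hm : ‖(p + q).1 - (w1 + w2)‖ + ‖(p + q).2 + f (w1 + w2)‖ + ε * ‖w1 + w2‖
          ∈ S (p + q) := ⟨w1 + w2, rfl⟩
      refine le_trans (csInf_le (hbdd _) hm) ?_
      have t1 : ‖(p + q).1 - (w1 + w2)‖ ≤ ‖p.1 - w1‖ + ‖q.1 - w2‖ := by
        have : (p + q).1 - (w1 + w2) = (p.1 - w1) + (q.1 - w2) := by
          simp [Prod.fst_add]; abel
        rw [this]; exact norm_add_le _ _
      have t2 : ‖(p + q).2 + f (w1 + w2)‖ ≤ ‖p.2 + f w1‖ + ‖q.2 + f w2‖ := by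
        have : (p + q).2 + f (w1 + w2) = (p.2 + f w1) + (q.2 + f w2) := by
          simp [Prod.snd_add, map_add]; abel
        rw [this]; exact norm_add_le _ _
      have t3 : ε * ‖w1 + w2‖ ≤ ε * ‖w1‖ + ε * ‖w2‖ := by
        nlinarith [norm_add_le w1 w2]
      linarith
    have step1 : ∀ b ∈ S q, sInf (S (p + q)) - b ≤ sInf (S p) := by
      intro b hb
      refine le_csInf (hne p) fun a ha => ?_
      linarith [key a ha b hb]
    have step2 : sInf (S (p + q)) - sInf (S p) ≤ sInf (S q) := by
      refine le_csInf (hne q) fun b hb => ?_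
      linarith [step1 b hb]
    linarith
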